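/- Let n be a positive integer, let S be an n×n complex unitary matrix with Sᵀ = S (equivalently S·conj(S) = 1), and let M be an n×n complex matrix with S·conj(M) = M·S. Then there exists an n×n unitary matrix U such that every entry of Uᴴ·M·U is real. -/

import Mathlib

open Matrix Polynomial

noncomputable def gg (x : ℝ) : ℂ := (1 + x * Complex.I) / (Real.sqrt (1 + x ^ 2) : ℂ)

lemma sqrt_ne (x : ℝ) : ((Real.sqrt (1 + x ^ 2) : ℝ) : ℂ) ≠ 0 := by
  have h : (0:ℝ) < Real.sqrt (1 + x ^ 2) := Real.sqrt_pos.mpr (by positivity)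
  exact_mod_cast h.ne'

lemma sq_sqrt' (x : ℝ) : ((Real.sqrt (1 + x ^ 2) : ℝ) : ℂ) ^ 2 = 1 + (x:ℂ) ^ 2 := by
  have h : Real.sqrt (1 + x ^ 2) ^ 2 = 1 + x ^ 2 := Real.sq_sqrt (by positivity)
  norm_cast

lemma one_add_sq_ne (x : ℝ) : (1 : ℂ) + (x:ℂ) ^ 2 ≠ 0 := by
  rw [← sq_sqrt']; exact pow_ne_zero _ (sqrt_ne x)

lemma one_sub_ne (x : ℝ) : (1 : ℂ) - x * Complex.I ≠ 0 := by
  intro h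
  have := congrArg Complex.re h
  simp at this

lemma conj_lin (x : ℝ) : (starRingEnd ℂ) (1 + x * Complex.I) = 1 - x * Complex.I := by
  simp [map_add, Complex.conj_I, Complex.conj_ofReal, sub_eq_add_neg, mul_neg]

lemma star_g_mul_g (x : ℝ) : (starRingEnd ℂ) (gg x) * gg x = 1 := by
  unfold gg
  rw [map_div₀, conj_lin, Complex.conj_ofReal, div_mul_div_comm, ← sq, sq_sqrt',
    div_eq_one_iff_eq (one_add_sq_ne x)]
  linear_combination (-(x:ℂ)^2) * Complex.I_sq

lemma g_sq (x : ℝ) : gg x ^ 2 = (1 + x * Complex.I) * (1 - x * Complex.I)⁻¹ := by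
  unfold gg
  rw [div_pow, sq_sqrt', eq_comm, mul_inv_eq_iff_eq_mul₀ (one_sub_ne x),
    div_mul_eq_mul_div, eq_div_iff (one_add_sq_ne x)]
  linear_combination ((x:ℂ)^2 + (x:ℂ)^3 * Complex.I) * Complex.I_sq


lemma key (n : ℕ) (S : Matrix (Fin n) (Fin n) ℂ)
    (hSu : Sᴴ * S = 1) (hSsymm : Sᵀ = S) (hdet : IsUnit (1 + S).det) :
    ∃ U : Matrix (Fin n) (Fin n) ℂ, Uᴴ * U = 1 ∧ U * Uᵀ = S := by
  classical
  have hSu' : S * Sᴴ = 1 := mul_eq_one_comm.mp hSu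
  set T : Matrix (Fin n) (Fin n) ℂ := (1 + S)⁻¹ with hTdef
  have hT : (1 + S) * T = 1 := mul_nonsing_inv _ hdet
  have hT' : T * (1 + S) = 1 := nonsing_inv_mul _ hdet
  have hswap : (1 + S) * (1 - S) = (1 - S) * (1 + S) := by noncomm_ring
  have hcomm : T * (1 - S) = (1 - S) * T := by
    calc T * (1 - S) = T * (1 - S) * ((1 + S) * T) := by rw [hT, mul_one]
      _ = T * ((1 - S) * (1 + S)) * T := by simp only [mul_assoc]
      _ = T * ((1 + S) * (1 - S)) * T := by rw [← hswap]
      _ = (T * (1 + S)) * ((1 - S) * T) := by simp only [mul_assoc]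
      _ = (1 - S) * T := by rw [hT', one_mul]
  set K : Matrix (Fin n) (Fin n) ℂ := Complex.I • ((1 - S) * T) with hKdef
  -- transpose of T
  have hTt : Tᵀ = T := by
    rw [hTdef, transpose_nonsing_inv, transpose_add, transpose_one, hSsymm]
  have hKt : Kᵀ = K := by
    rw [hKdef, transpose_smul, transpose_mul, hTt, transpose_sub, transpose_one, hSsymm, hcomm]
  -- conjugate transpose of T
  have hTH : Tᴴ = T * S := by
    have h1 : (1 + Sᴴ) * Tᴴ = 1 := by
      have : (T * (1 + S))ᴴ = (1 : Matrix (Fin n) (Fin n) ℂ) := by rw [hT']; simp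
      rwa [conjTranspose_mul, conjTranspose_add, conjTranspose_one] at this
    have h2 : (T * S) * (1 + Sᴴ) = 1 := by
      calc (T * S) * (1 + Sᴴ) = T * S + T * (S * Sᴴ) := by rw [mul_add, mul_one, mul_assoc]
        _ = T * (1 + S) := by rw [hSu', mul_one, mul_add, mul_one, add_comm]
        _ = 1 := hT'
    calc Tᴴ = 1 * Tᴴ := (one_mul _).symm
      _ = (T * S) * (1 + Sᴴ) * Tᴴ := by rw [h2]
      _ = (T * S) * ((1 + Sᴴ) * Tᴴ) := by simp only [mul_assoc]
      _ = T * S := by rw [h1, mul_one]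
  have hKH : Kᴴ = K := by
    have : Kᴴ = (-Complex.I) • ((T * S) * (1 - Sᴴ)) := by
      rw [hKdef, conjTranspose_smul, conjTranspose_mul, hTH, conjTranspose_sub,
        conjTranspose_one, Complex.star_def, Complex.conj_I]
    rw [this]
    have h3 : (T * S) * (1 - Sᴴ) = -((1 - S) * T) := by
      calc (T * S) * (1 - Sᴴ) = T * S - T * (S * Sᴴ) := by rw [mul_sub, mul_one, mul_assoc]
        _ = -(T * (1 - S)) := by rw [hSu', mul_one, mul_sub, mul_one, neg_sub]
        _ = -((1 - S) * T) := by rw [hcomm]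
    rw [h3, hKdef, smul_neg, neg_smul, neg_neg]
  -- K is real
  have hKreal : ∀ i j, (starRingEnd ℂ) (K i j) = K i j := by
    intro i j
    have h1 : Kᴴ i j = (starRingEnd ℂ) (K j i) := rfl
    have h2 : K j i = K i j := by conv_lhs => rw [← hKt, transpose_apply]
    rw [← h2, ← h1, hKH, h2]
  -- K is the complexification of a real symmetric matrix Kr
  set Kr : Matrix (Fin n) (Fin n) ℝ := of (fun i j => (K i j).re) with hKrdef
  have hKmap : Kr.map (Complex.ofRealHom) = K := by
    ext i j
    simp only [map_apply, hKrdef, of_apply, Complex.ofRealHom_eq_coe]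
    exact Complex.conj_eq_iff_re.mp (hKreal i j)
  have hKji : ∀ i j, K j i = K i j := by
    intro i j; conv_lhs => rw [← hKt, transpose_apply]
  have hKrH : Kr.IsHermitian := by
    ext i j
    simp only [conjTranspose_apply, hKrdef, of_apply, star_trivial]
    rw [hKji i j]
  -- spectral decomposition of Kr
  set O : Matrix (Fin n) (Fin n) ℝ := (hKrH.eigenvectorUnitary : Matrix (Fin n) (Fin n) ℝ)
    with hOdef
  set d : Fin n → ℝ := hKrH.eigenvalues with hddef
  have hspec : Kr = O * diagonal d * star O := by
    have := hKrH.spectral_theorem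
    simpa [RCLike.ofReal_real_eq_id] using this
  have hO1 : star O * O = 1 :=
    (Matrix.mem_unitaryGroup_iff').mp (hKrH.eigenvectorUnitary).2
  have hO2 : O * star O = 1 :=
    (Matrix.mem_unitaryGroup_iff).mp (hKrH.eigenvectorUnitary).2
  have hstarO : star O = Oᵀ := by
    ext i j
    simp [star_apply, star_trivial]
  -- complexify
  set Oc : Matrix (Fin n) (Fin n) ℂ := O.map (Complex.ofRealHom) with hOcdef
  have hOc1 : Ocᵀ * Oc = 1 := by
    have := congrArg (fun A => A.map (Complex.ofRealHom : ℝ →+* ℂ)) hO1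
    simpa [Matrix.map_mul, hstarO, transpose_map] using this
  have hOc2 : Oc * Ocᵀ = 1 := by
    have := congrArg (fun A => A.map (Complex.ofRealHom : ℝ →+* ℂ)) hO2
    simpa [Matrix.map_mul, hstarO, transpose_map] using this
  set dc : Fin n → ℂ := fun k => ((d k : ℝ) : ℂ) with hdcdef
  have hKc : K = Oc * diagonal dc * Ocᵀ := by
    rw [← hKmap, hspec, Matrix.map_mul, Matrix.map_mul, hstarO]
    rw [diagonal_map (by simp), transpose_map]
    rfl
  have collapse : ∀ D1 D2 : Matrix (Fin n) (Fin n) ℂ,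
      (Oc * D1 * Ocᵀ) * (Oc * D2 * Ocᵀ) = Oc * (D1 * D2) * Ocᵀ := by
    intro D1 D2
    calc (Oc * D1 * Ocᵀ) * (Oc * D2 * Ocᵀ)
        = Oc * (D1 * ((Ocᵀ * Oc) * (D2 * Ocᵀ))) := by simp only [mul_assoc]
      _ = Oc * (D1 * D2) * Ocᵀ := by rw [hOc1, one_mul]; simp only [mul_assoc]
  -- the candidate square root
  set U : Matrix (Fin n) (Fin n) ℂ := Oc * diagonal (fun k => gg (d k)) * Ocᵀ with hUdef
  have hOcH : Ocᴴ = Ocᵀ := by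
    ext i j
    simp [conjTranspose_apply, hOcdef, map_apply, Complex.conj_ofReal]
  have hOcTH : (Ocᵀ)ᴴ = Oc := by
    ext i j
    simp [conjTranspose_apply, hOcdef, map_apply, Complex.conj_ofReal]
  have hUt : Uᵀ = U := by
    rw [hUdef, transpose_mul, transpose_mul, transpose_transpose, diagonal_transpose,
      mul_assoc]
  have hUH : Uᴴ = Oc * diagonal (fun k => (starRingEnd ℂ) (gg (d k))) * Ocᵀ := by
    rw [hUdef, conjTranspose_mul, conjTranspose_mul, hOcTH, hOcH, diagonal_conjTranspose]
    simp only [mul_assoc]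
    rfl
  have hUu : Uᴴ * U = 1 := by
    rw [hUH, hUdef, collapse, diagonal_mul_diagonal]
    have : (fun k => (starRingEnd ℂ) (gg (d k)) * gg (d k)) = fun _ => (1:ℂ) := by
      funext k; exact star_g_mul_g (d k)
    rw [this, diagonal_one, mul_one, hOc2]
  -- now show U * U = S
  have hIK : Complex.I • K = -((1 - S) * T) := by
    rw [hKdef, smul_smul, Complex.I_mul_I, neg_one_smul]
  have cancel : ∀ A B : Matrix (Fin n) (Fin n) ℂ, A * (1 + S) = B * (1 + S) → A = B := by
    intro A B h
    have h2 := congrArg (· * T) h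
    simpa only [mul_assoc, hT, mul_one] using h2
  have hlin : 1 + Complex.I • K = S * (1 - Complex.I • K) := by
    rw [hIK, ← sub_eq_add_neg, sub_neg_eq_add]
    apply cancel
    have e1 : (1 - (1 - S) * T) * (1 + S) = (1 + S) - (1 - S) := by
      rw [sub_mul, one_mul, mul_assoc, hT', mul_one]
    have e2 : (S * (1 + (1 - S) * T)) * (1 + S) = S * ((1 + S) + (1 - S)) := by
      rw [mul_assoc, add_mul, one_mul, mul_assoc, hT', mul_one, mul_add]
    rw [e1, e2]
    noncomm_ring
  have hA1 : 1 + Complex.I • K = Oc * diagonal (fun k => 1 + dc k * Complex.I) * Ocᵀ := by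
    have hd : (diagonal (fun k => 1 + dc k * Complex.I) : Matrix (Fin n) (Fin n) ℂ)
        = 1 + Complex.I • diagonal dc := by
      ext i j
      by_cases h : i = j <;> simp [h, diagonal_apply, one_apply, mul_comm]
    rw [hd, mul_add, add_mul, mul_one, hOc2, mul_smul_comm, smul_mul_assoc, ← hKc]
  have hB1 : 1 - Complex.I • K = Oc * diagonal (fun k => 1 - dc k * Complex.I) * Ocᵀ := by
    have hd : (diagonal (fun k => 1 - dc k * Complex.I) : Matrix (Fin n) (Fin n) ℂ)
        = 1 - Complex.I • diagonal dc := by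
      ext i j
      by_cases h : i = j <;> simp [h, diagonal_apply, one_apply, mul_comm]
    rw [hd, mul_sub, sub_mul, mul_one, hOc2, mul_smul_comm, smul_mul_assoc, ← hKc]
  have hBinv : (1 - Complex.I • K) * (Oc * diagonal (fun k => (1 - dc k * Complex.I)⁻¹) * Ocᵀ)
      = 1 := by
    rw [hB1, collapse, diagonal_mul_diagonal]
    have : (fun k => (1 - dc k * Complex.I) * (1 - dc k * Complex.I)⁻¹) = fun _ => (1:ℂ) := by
      funext k; exact mul_inv_cancel₀ (one_sub_ne (d k))
    rw [this, diagonal_one, mul_one, hOc2]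
  have hSdecomp : S = Oc * diagonal
      (fun k => (1 + dc k * Complex.I) * (1 - dc k * Complex.I)⁻¹) * Ocᵀ := by
    calc S = S * ((1 - Complex.I • K) * (Oc * diagonal (fun k => (1 - dc k * Complex.I)⁻¹) * Ocᵀ))
          := by rw [hBinv, mul_one]
      _ = (S * (1 - Complex.I • K)) * (Oc * diagonal (fun k => (1 - dc k * Complex.I)⁻¹) * Ocᵀ)
          := (mul_assoc S _ _).symm
      _ = (1 + Complex.I • K) * (Oc * diagonal (fun k => (1 - dc k * Complex.I)⁻¹) * Ocᵀ)
          := by rw [← hlin]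
      _ = Oc * diagonal (fun k => (1 + dc k * Complex.I) * (1 - dc k * Complex.I)⁻¹) * Ocᵀ := by
          rw [hA1, collapse, diagonal_mul_diagonal]
  have hUsq : U * U = S := by
    rw [hUdef, collapse, diagonal_mul_diagonal, hSdecomp]
    have he : (fun i => gg (d i) * gg (d i))
        = fun k => (1 + dc k * Complex.I) * (1 - dc k * Complex.I)⁻¹ := by
      funext k
      rw [← sq]
      exact g_sq (d k)
    rw [he]
  exact ⟨U, hUu, by rw [hUt, hUsq]⟩


lemma exists_z (n : ℕ) (S : Matrix (Fin n) (Fin n) ℂ) :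
    ∃ z : ℂ, ‖z‖ = 1 ∧ (1 + z • S).det ≠ 0 := by
  classical
  set p : Polynomial ℂ := (1 + (X : ℂ[X]) • S.map C).det with hpdef
  have heval : ∀ z : ℂ, (1 + z • S).det = p.eval z := by
    intro z
    have h1 : (evalRingHom z) p = ((1 + (X : ℂ[X]) • S.map C).map (evalRingHom z)).det :=
      RingHom.map_det (evalRingHom z) _
    have h2 : (1 + (X : ℂ[X]) • S.map C).map (evalRingHom z) = 1 + z • S := by
      ext i j
      rw [Matrix.map_apply, Matrix.add_apply, Matrix.add_apply, Matrix.smul_apply,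
        Matrix.smul_apply, Matrix.map_apply, map_add]
      simp only [smul_eq_mul]
      have e : (evalRingHom z) ((X : ℂ[X]) * C (S i j)) = z * S i j := by
        simp only [coe_evalRingHom, eval_mul, eval_X, eval_C]
      rw [e]
      by_cases h : i = j
      · subst h
        rw [Matrix.one_apply_eq, Matrix.one_apply_eq, _root_.map_one]
      · rw [Matrix.one_apply_ne h, Matrix.one_apply_ne h, _root_.map_zero]
    rw [← h2, ← h1]
    rfl
  have hp0 : p.eval 0 = 1 := by
    rw [← heval 0, zero_smul, add_zero, det_one]
  have hpne : p ≠ 0 := by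
    intro h
    rw [h, eval_zero] at hp0
    exact zero_ne_one hp0
  have hfin : Set.Finite { x : ℂ | p.IsRoot x } := p.finite_setOf_isRoot hpne
  -- the image of (0,1) under θ ↦ exp(θ i) is infinite
  set f : ℝ → ℂ := fun θ => Complex.exp (θ * Complex.I) with hfdef
  have hinj : Set.InjOn f (Set.Ioo (0:ℝ) 1) := by
    intro a ha b hb hab
    have := Complex.exp_eq_exp_iff_exists_int.mp hab
    obtain ⟨k, hk⟩ := this
    have him := congrArg Complex.im hk
    simp [Complex.add_im, Complex.mul_im, Complex.mul_re] at him
    -- him : a = b + k * (2 * π)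
    have hpi : (3:ℝ) < Real.pi := Real.pi_gt_three
    have hk0 : k = 0 := by
      rcases lt_trichotomy k 0 with h | h | h
      · have hk1 : k + 1 ≤ 0 := by omega
        have : (k:ℝ) + 1 ≤ 0 := by exact_mod_cast hk1
        nlinarith [ha.1, ha.2, hb.1, hb.2]
      · exact h
      · have : (1:ℝ) ≤ (k:ℝ) := by exact_mod_cast h
        nlinarith [ha.1, ha.2, hb.1, hb.2]
    rw [hk0] at him
    simpa using him
  have himg : (f '' Set.Ioo (0:ℝ) 1).Infinite :=
    Set.Infinite.image hinj (Set.Ioo_infinite (by norm_num))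
  have : ¬ (f '' Set.Ioo (0:ℝ) 1 ⊆ { x : ℂ | p.IsRoot x }) := by
    intro hsub
    exact himg (hfin.subset hsub)
  rw [Set.not_subset] at this
  obtain ⟨z, hz, hznr⟩ := this
  refine ⟨z, ?_, ?_⟩
  · obtain ⟨θ, _, rfl⟩ := hz
    simp only [hfdef]
    exact Complex.norm_exp_ofReal_mul_I θ
  · rw [heval]
    exact fun h => hznr h

/-- β = 1 reality: if `M` commutes with the anti-unitary map `v ↦ S conj(v)` where `S` is
unitary symmetric (so the anti-unitary squares to `+1`), then `M` can be conjugated by a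
unitary matrix to a matrix with real entries. -/
theorem stmt6 (n : ℕ) (hn : 0 < n) (S M : Matrix (Fin n) (Fin n) ℂ)
    (hSu : Sᴴ * S = 1) (hSsymm : Sᵀ = S)
    (hSM : S * M.map (starRingEnd ℂ) = M * S) :
    ∃ U : Matrix (Fin n) (Fin n) ℂ, Uᴴ * U = 1 ∧
      ∀ i j, ((Uᴴ * M * U) i j).im = 0 := by
  classical
  obtain ⟨z, hz, hzdet⟩ := exists_z n S
  have hzne : z ≠ 0 := by
    intro h
    rw [h] at hz
    simp at hz
  have hzconj : (starRingEnd ℂ) z * z = 1 := by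
    rw [mul_comm, Complex.mul_conj]
    norm_cast
    rw [Complex.normSq_eq_norm_sq, hz]
    norm_num
  set S' : Matrix (Fin n) (Fin n) ℂ := z • S with hS'def
  have h1 : S'ᴴ * S' = 1 := by
    rw [hS'def, conjTranspose_smul, smul_mul_assoc, mul_smul_comm, smul_smul,
      Complex.star_def, hzconj, one_smul, hSu]
  have h2 : S'ᵀ = S' := by rw [hS'def, transpose_smul, hSsymm]
  have h3 : IsUnit (1 + S').det := isUnit_iff_ne_zero.mpr hzdet
  obtain ⟨U₀, hU₀u, hU₀s⟩ := key n S' h1 h2 h3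
  obtain ⟨c, hc⟩ := IsAlgClosed.exists_pow_nat_eq (z⁻¹) (n := 2) (by norm_num)
  have hcz : c ^ 2 * z = 1 := by rw [hc]; exact inv_mul_cancel₀ hzne
  have hcabs : (starRingEnd ℂ) c * c = 1 := by
    have habs : ‖c‖ ^ 2 = 1 := by
      rw [← norm_pow, hc, norm_inv, hz]
      norm_num
    rw [mul_comm, Complex.mul_conj]
    norm_cast
    rw [Complex.normSq_eq_norm_sq, habs]
  set U : Matrix (Fin n) (Fin n) ℂ := c • U₀ with hUdef
  have hUu : Uᴴ * U = 1 := by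
    rw [hUdef, conjTranspose_smul, smul_mul_assoc, mul_smul_comm, smul_smul,
      Complex.star_def, hcabs, one_smul, hU₀u]
  have hUS : U * Uᵀ = S := by
    rw [hUdef, transpose_smul, smul_mul_assoc, mul_smul_comm, smul_smul, hU₀s, hS'def,
      smul_smul, ← sq, hcz, one_smul]
  -- U conjugates M to a real matrix
  have h1map : (1 : Matrix (Fin n) (Fin n) ℂ).map (starRingEnd ℂ) = 1 :=
    Matrix.map_one _ (map_zero _) (map_one _)
  have hmapUH : (Uᴴ).map (starRingEnd ℂ) = Uᵀ := by
    ext i j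
    simp [conjTranspose_apply, Matrix.map_apply]
  have hmapUT : (Uᵀ)ᴴ = U.map (starRingEnd ℂ) := by
    ext i j
    simp [conjTranspose_apply, Matrix.map_apply]
  have hUc1 : Uᵀ * U.map (starRingEnd ℂ) = 1 := by
    have h := congrArg (fun A => A.map (starRingEnd ℂ)) hUu
    simp only [Matrix.map_mul, hmapUH, h1map] at h
    exact h
  have hMc : M.map (starRingEnd ℂ) = Sᴴ * (M * S) := by
    calc M.map (starRingEnd ℂ) = (Sᴴ * S) * M.map (starRingEnd ℂ) := by rw [hSu, one_mul]
      _ = Sᴴ * (S * M.map (starRingEnd ℂ)) := by rw [mul_assoc]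
      _ = Sᴴ * (M * S) := by rw [hSM]
  have hSUc : S * U.map (starRingEnd ℂ) = U := by
    rw [← hUS, mul_assoc, hUc1, mul_one]
  have hUtSH : Uᵀ * Sᴴ = Uᴴ := by
    rw [← hUS, conjTranspose_mul, hmapUT, ← mul_assoc, hUc1, one_mul]
  have hfinal : (Uᴴ * M * U).map (starRingEnd ℂ) = Uᴴ * M * U := by
    calc (Uᴴ * M * U).map (starRingEnd ℂ)
        = (Uᴴ).map (starRingEnd ℂ) * M.map (starRingEnd ℂ) * U.map (starRingEnd ℂ) := by
          rw [Matrix.map_mul, Matrix.map_mul]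
      _ = Uᵀ * (Sᴴ * (M * S)) * U.map (starRingEnd ℂ) := by rw [hmapUH, hMc]
      _ = (Uᵀ * Sᴴ) * M * (S * U.map (starRingEnd ℂ)) := by simp only [mul_assoc]
      _ = Uᴴ * M * U := by rw [hUtSH, hSUc]
  refine ⟨U, hUu, fun i j => ?_⟩
  have h : (Uᴴ * M * U).map (starRingEnd ℂ) i j = (Uᴴ * M * U) i j := by rw [hfinal]
  rw [Matrix.map_apply] at h
  exact Complex.conj_eq_iff_im.mp h
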